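/- Along any solution of the particle system, the discretized mechanical energy E_n(t) = (1/(na))[Σᵢ₌₁ⁿ H(wᵢ(t)) + Σᵢ₌₂ⁿ Φ(na·sᵢ(t))] satisfies dE_n/dt = -n Σᵢ₌₂ⁿ K(na·sᵢ(t))(w_{i-1}(t) - wᵢ(t))² - (σ/(na)) Σᵢ₌₁ⁿ wᵢ(t)β(wᵢ(t)) ≤ 0, as long as the solution is defined. -/

import Mathlib

open Finset Set

private lemma sum_telescope_aux (n : ℕ) (hn : 2 ≤ n) (A B T S : ℕ → ℝ)
    (h1 : A 1 = B 1 + S 2)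
    (hm : ∀ i, 2 ≤ i → i ≤ n - 1 → A i = B i + T i + S (i + 1))
    (hl : A n = B n + T n) :
    ∑ i ∈ Finset.Icc 1 n, A i =
      ∑ i ∈ Finset.Icc 1 n, B i + ∑ i ∈ Finset.Icc 2 n, (T i + S i) := by
  have aux : ∀ m, 1 ≤ m → m ≤ n - 1 →
      ∑ i ∈ Finset.Icc 1 m, A i =
        ∑ i ∈ Finset.Icc 1 m, B i + ∑ i ∈ Finset.Icc 2 m, (T i + S i) + S (m + 1) := by
    intro m
    induction m with
    | zero => intro h; omega
    | succ k ih =>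
      intro _ hle
      rcases Nat.eq_zero_or_pos k with hk | hk
      · subst hk
        simp [h1, Finset.Icc_eq_empty_of_lt (by norm_num : (2:ℕ) > 1)]
      · have hk1 : 1 ≤ k := hk
        have hkn : k ≤ n - 1 := by omega
        have hA := Finset.sum_Icc_succ_top (by omega : 1 ≤ k + 1) A
        have hB := Finset.sum_Icc_succ_top (by omega : 1 ≤ k + 1) B
        have hTS := Finset.sum_Icc_succ_top (by omega : 2 ≤ k + 1) (fun i => T i + S i)
        rw [hA, hB, hTS, ih hk1 hkn, hm (k+1) (by omega) hle]
        ring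
  have hEq : n - 1 + 1 = n := by omega
  have h := aux (n - 1) (by omega) le_rfl
  have hA := Finset.sum_Icc_succ_top (by omega : 1 ≤ n - 1 + 1) A
  have hB := Finset.sum_Icc_succ_top (by omega : 1 ≤ n - 1 + 1) B
  have hTS := Finset.sum_Icc_succ_top (by omega : 2 ≤ n - 1 + 1) (fun i => T i + S i)
  rw [hEq] at hA hB hTS h
  rw [hA, hB, hTS, h, hl]
  ring

theorem energy_decay
    (n : ℕ) (hn : 2 ≤ n) (a σ b R : ℝ) (ha : 0 < a) (hσ : 0 < σ) (hb : 0 < b) (hR : 1 < R)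
    (β q H K Φ Φ' : ℝ → ℝ)
    -- β is an antiderivative of q, with β(0)=0 and wβ(w) ≥ 0 on (-1,b)
    (hβq : ∀ v ∈ Set.Ioo (-1 : ℝ) b, HasDerivAt β (q v) v)
    (hβ0 : β 0 = 0)
    (hwβ : ∀ v ∈ Set.Ioo (-1 : ℝ) b, 0 ≤ v * β v)
    -- H' (w) = w q(w), H ≥ 0
    (hHq : ∀ v ∈ Set.Ioo (-1 : ℝ) b, HasDerivAt H (v * q v) v)
    (hHpos : ∀ v ∈ Set.Ioo (-1 : ℝ) b, 0 ≤ H v)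
    -- K ≥ 0, Φ' is the derivative of Φ, Φ'' = (σ/a)K
    (hKpos : ∀ s : ℝ, 1/R < s → 0 ≤ K s)
    (hΦd : ∀ s : ℝ, 1/R < s → HasDerivAt Φ (Φ' s) s)
    (hΦ'' : ∀ s : ℝ, 1/R < s → HasDerivAt Φ' ((σ/a) * K s) s)
    -- the solution of the particle system on ℝ≥0
    (x w dw : ℕ → ℝ → ℝ)
    -- state-space constraints
    (hstate_w : ∀ t : ℝ, 0 ≤ t → ∀ i ∈ Finset.Icc 1 n, w i t ∈ Set.Ioo (-1 : ℝ) b)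
    (hstate_s : ∀ t : ℝ, 0 ≤ t → ∀ i ∈ Finset.Icc 2 n,
      1/R < (n : ℝ) * a * (x (i-1) t - x i t))
    -- dynamics
    (hx : ∀ t : ℝ, 0 ≤ t → ∀ i ∈ Finset.Icc 1 n, HasDerivAt (x i) (w i t) t)
    (hw : ∀ t : ℝ, 0 ≤ t → ∀ i ∈ Finset.Icc 1 n, HasDerivAt (w i) (dw i t) t)
    (hode1 : ∀ t : ℝ, 0 ≤ t →
      q (w 1 t) * dw 1 t =
        -σ * β (w 1 t) - (n : ℝ) * a * Φ' ((n : ℝ) * a * (x 1 t - x 2 t))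
        + (n : ℝ)^2 * a * K ((n : ℝ) * a * (x 1 t - x 2 t)) * (w 2 t - w 1 t))
    (hodei : ∀ t : ℝ, 0 ≤ t → ∀ i, 2 ≤ i → i ≤ n - 1 →
      q (w i t) * dw i t =
        -σ * β (w i t)
        + (n : ℝ) * a * Φ' ((n : ℝ) * a * (x (i-1) t - x i t))
        - (n : ℝ) * a * Φ' ((n : ℝ) * a * (x i t - x (i+1) t))
        + (n : ℝ)^2 * a * K ((n : ℝ) * a * (x (i-1) t - x i t)) * (w (i-1) t - w i t)
        + (n : ℝ)^2 * a * K ((n : ℝ) * a * (x i t - x (i+1) t)) * (w (i+1) t - w i t))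
    (hoden : ∀ t : ℝ, 0 ≤ t →
      q (w n t) * dw n t =
        -σ * β (w n t) + (n : ℝ) * a * Φ' ((n : ℝ) * a * (x (n-1) t - x n t))
        + (n : ℝ)^2 * a * K ((n : ℝ) * a * (x (n-1) t - x n t)) * (w (n-1) t - w n t)) :
    ∀ t : ℝ, 0 ≤ t →
      HasDerivAt (fun τ => (1 / ((n : ℝ) * a)) *
          ((∑ i ∈ Finset.Icc 1 n, H (w i τ)) +
           ∑ i ∈ Finset.Icc 2 n, Φ ((n : ℝ) * a * (x (i-1) τ - x i τ))))
        (-(n : ℝ) * ∑ i ∈ Finset.Icc 2 n,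
            K ((n : ℝ) * a * (x (i-1) t - x i t)) * (w (i-1) t - w i t)^2
         - (σ / ((n : ℝ) * a)) * ∑ i ∈ Finset.Icc 1 n, w i t * β (w i t)) t
      ∧
      (-(n : ℝ) * ∑ i ∈ Finset.Icc 2 n,
            K ((n : ℝ) * a * (x (i-1) t - x i t)) * (w (i-1) t - w i t)^2
         - (σ / ((n : ℝ) * a)) * ∑ i ∈ Finset.Icc 1 n, w i t * β (w i t)) ≤ 0 := by
  intro t ht
  have hna : (0:ℝ) < (n : ℝ) * a := by positivity
  -- derivative of the kinetic part
  have h1d : HasDerivAt (fun τ => ∑ i ∈ Finset.Icc 1 n, H (w i τ))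
      (∑ i ∈ Finset.Icc 1 n, (w i t * q (w i t)) * dw i t) t := by
    apply HasDerivAt.fun_sum
    intro i hi
    exact (hHq (w i t) (hstate_w t ht i hi)).comp t (hw t ht i hi)
  -- derivative of the potential part
  have h2d : HasDerivAt
      (fun τ => ∑ i ∈ Finset.Icc 2 n, Φ ((n : ℝ) * a * (x (i-1) τ - x i τ)))
      (∑ i ∈ Finset.Icc 2 n,
        Φ' ((n : ℝ) * a * (x (i-1) t - x i t)) * ((n : ℝ) * a * (w (i-1) t - w i t))) t := by
    apply HasDerivAt.fun_sum
    intro i hi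
    have hi' := Finset.mem_Icc.mp hi
    have m1 : i - 1 ∈ Finset.Icc 1 n := Finset.mem_Icc.mpr ⟨by omega, by omega⟩
    have m2 : i ∈ Finset.Icc 1 n := Finset.mem_Icc.mpr ⟨by omega, by omega⟩
    have inner : HasDerivAt (fun τ => (n : ℝ) * a * (x (i-1) τ - x i τ))
        ((n : ℝ) * a * (w (i-1) t - w i t)) t :=
      ((hx t ht (i-1) m1).sub (hx t ht i m2)).const_mul ((n : ℝ) * a)
    exact (hΦd _ (hstate_s t ht i hi)).comp t inner
  have hD := (h1d.add h2d).const_mul (1 / ((n : ℝ) * a))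
  -- the telescoping identity
  have key := sum_telescope_aux n hn
    (fun i => (w i t * q (w i t)) * dw i t)
    (fun i => -(σ * (w i t * β (w i t))))
    (fun i => (n : ℝ) * a * Φ' ((n : ℝ) * a * (x (i-1) t - x i t)) * w i t
      + (n : ℝ)^2 * a * K ((n : ℝ) * a * (x (i-1) t - x i t)) * (w (i-1) t - w i t) * w i t)
    (fun i => -((n : ℝ) * a * Φ' ((n : ℝ) * a * (x (i-1) t - x i t)) * w (i-1) t)
      + (n : ℝ)^2 * a * K ((n : ℝ) * a * (x (i-1) t - x i t)) * (w i t - w (i-1) t) * w (i-1) t)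
    (by
      norm_num
      linear_combination w 1 t * hode1 t ht)
    (by
      intro i h2 hin
      simp only [Nat.add_sub_cancel]
      linear_combination w i t * hodei t ht i h2 hin)
    (by linear_combination w n t * hoden t ht)
  -- combine the potential derivative with the interface terms
  have e1 : ∑ i ∈ Finset.Icc 2 n,
        (((n : ℝ) * a * Φ' ((n : ℝ) * a * (x (i-1) t - x i t)) * w i t
          + (n : ℝ)^2 * a * K ((n : ℝ) * a * (x (i-1) t - x i t)) * (w (i-1) t - w i t) * w i t)
         + (-((n : ℝ) * a * Φ' ((n : ℝ) * a * (x (i-1) t - x i t)) * w (i-1) t)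
          + (n : ℝ)^2 * a * K ((n : ℝ) * a * (x (i-1) t - x i t)) * (w i t - w (i-1) t) * w (i-1) t))
      + ∑ i ∈ Finset.Icc 2 n,
        Φ' ((n : ℝ) * a * (x (i-1) t - x i t)) * ((n : ℝ) * a * (w (i-1) t - w i t))
      = -((n : ℝ)^2 * a) * ∑ i ∈ Finset.Icc 2 n,
          K ((n : ℝ) * a * (x (i-1) t - x i t)) * (w (i-1) t - w i t)^2 := by
    rw [← Finset.sum_add_distrib, Finset.mul_sum]
    refine Finset.sum_congr rfl fun i _ => by ring
  have hval : (1 / ((n : ℝ) * a)) *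
      ((∑ i ∈ Finset.Icc 1 n, (w i t * q (w i t)) * dw i t) +
        ∑ i ∈ Finset.Icc 2 n,
          Φ' ((n : ℝ) * a * (x (i-1) t - x i t)) * ((n : ℝ) * a * (w (i-1) t - w i t)))
      = -(n : ℝ) * ∑ i ∈ Finset.Icc 2 n,
            K ((n : ℝ) * a * (x (i-1) t - x i t)) * (w (i-1) t - w i t)^2
        - (σ / ((n : ℝ) * a)) * ∑ i ∈ Finset.Icc 1 n, w i t * β (w i t) := by
    rw [key, Finset.sum_neg_distrib, ← Finset.mul_sum, add_assoc, e1]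
    field_simp
    ring
  constructor
  · rw [← hval]; exact hD
  · have hQ : 0 ≤ ∑ i ∈ Finset.Icc 2 n,
        K ((n : ℝ) * a * (x (i-1) t - x i t)) * (w (i-1) t - w i t)^2 :=
      Finset.sum_nonneg fun i hi =>
        mul_nonneg (hKpos _ (hstate_s t ht i hi)) (sq_nonneg _)
    have hP : 0 ≤ ∑ i ∈ Finset.Icc 1 n, w i t * β (w i t) :=
      Finset.sum_nonneg fun i hi => hwβ _ (hstate_w t ht i hi)
    have h1 : 0 ≤ (n : ℝ) := by positivity
    have h2 : 0 ≤ σ / ((n : ℝ) * a) := by positivity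
    nlinarith [mul_nonneg h1 hQ, mul_nonneg h2 hP]
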